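/- Let B be a class of polynomial densities on Ω with ∫_Ω b̃ = 1 for all b̃ ∈ B, and let d be a divergence on B × B satisfying d(f,f) = 0, d(f,g) ≥ 0, and d(f,g) = 0 ⟹ f = g a.e. If two densities b, b̃ ∈ B have proportional restrictions to the control region C (i.e., b/B(C) = b̃/B̃(C) a.e. on C), then b = b̃ a.e. on Ω; consequently the true background b is the unique minimizer over B of d(b/B(C)·I_C, b̃/B̃(C)·I_C). -/

import Mathlib

open MeasureTheory

/-- Two polynomials agreeing a.e. on a set of positive measure are equal. -/
lemma poly_eq_of_ae_eq (C : Set ℝ) (hCpos : 0 < volume C)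
    (p q : Polynomial ℝ) (h : ∀ᵐ x ∂(volume.restrict C), p.eval x = q.eval x) :
    p = q := by
  by_contra hne
  have hr : p - q ≠ 0 := sub_ne_zero.mpr hne
  have hfin : Set.Finite {x | (p - q).eval x = 0} := Polynomial.finite_setOf_isRoot hr
  set Z := {x : ℝ | (p - q).eval x = 0} with hZ
  have h' : ∀ᵐ x ∂(volume.restrict C), x ∈ Z := by
    filter_upwards [h] with x hx
    simp [hZ, Polynomial.eval_sub, hx]
  have hZc : volume.restrict C Zᶜ = 0 := by
    have := h'
    rw [ae_iff] at this
    simpa [Set.compl_def] using this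
  have hZ0 : volume.restrict C Z = 0 := by
    have h1 : volume.restrict C Z ≤ volume Z := Measure.restrict_le_self Z
    have h2 : volume Z = 0 := hfin.measure_zero volume
    exact le_antisymm (h1.trans_eq h2) zero_le
  have : volume C = 0 := by
    have huniv : volume.restrict C Set.univ = volume C := by simp
    have : volume.restrict C Set.univ ≤ volume.restrict C Z + volume.restrict C Zᶜ := by
      rw [← Set.union_compl_self Z]
      exact measure_union_le _ _
    rw [huniv, hZ0, hZc] at this
    simpa using this
  exact hCpos.ne' this

/-- Key step: proportional on C a.e. plus normalization implies equality everywhere. -/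
lemma key_step (Ωs C : Set ℝ) (hCpos : 0 < volume C)
    (pb : Polynomial ℝ) (b : ℝ → ℝ) (hb : ∀ x, b x = pb.eval x)
    (hbnorm : ∫ x in Ωs, b x = 1)
    (BC : ℝ) (hBCpos : 0 < BC)
    (qb : Polynomial ℝ) (btilde : ℝ → ℝ) (hbt : ∀ x, btilde x = qb.eval x)
    (hbtnorm : ∫ x in Ωs, btilde x = 1)
    (BtC : ℝ) (hBtCpos : 0 < BtC)
    (hprop : ∀ᵐ x ∂(volume.restrict C), b x / BC = btilde x / BtC) :
    ∀ x, b x = btilde x := by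
  have hBC0 : BC ≠ 0 := hBCpos.ne'
  have hBtC0 : BtC ≠ 0 := hBtCpos.ne'
  have hpoly : BtC • pb = BC • qb := by
    apply poly_eq_of_ae_eq C hCpos
    filter_upwards [hprop] with x hx
    have := (div_eq_div_iff hBC0 hBtC0).mp hx
    simp only [Polynomial.eval_smul, smul_eq_mul, ← hb, ← hbt]
    linarith
  have heq : ∀ x, BtC * b x = BC * btilde x := by
    intro x
    have := congrArg (fun r => Polynomial.eval x r) hpoly
    simpa [Polynomial.eval_smul, smul_eq_mul, ← hb, ← hbt] using this
  have hint : BtC * ∫ x in Ωs, b x = BC * ∫ x in Ωs, btilde x := by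
    rw [← integral_const_mul, ← integral_const_mul]
    exact integral_congr_ae (Filter.Eventually.of_forall fun x => heq x)
  rw [hbnorm, hbtnorm, mul_one, mul_one] at hint
  intro x
  have := heq x
  rw [hint] at this
  exact mul_left_cancel₀ hBC0 this

theorem stmt_10 (Ωs C : Set ℝ) (hCsub : C ⊆ Ωs) (hC : MeasurableSet C)
    (hCpos : 0 < volume C)
    (pb : Polynomial ℝ) (b : ℝ → ℝ) (hb : ∀ x, b x = pb.eval x)
    (hbint : IntegrableOn b Ωs) (hbnorm : ∫ x in Ωs, b x = 1)
    (BC : ℝ) (hBC : BC = ∫ x in C, b x) (hBCpos : 0 < BC)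
    (qb : Polynomial ℝ) (btilde : ℝ → ℝ) (hbt : ∀ x, btilde x = qb.eval x)
    (hbtint : IntegrableOn btilde Ωs) (hbtnorm : ∫ x in Ωs, btilde x = 1)
    (BtC : ℝ) (hBtC : BtC = ∫ x in C, btilde x) (hBtCpos : 0 < BtC)
    (hprop : ∀ᵐ x ∂(volume.restrict C), b x / BC = btilde x / BtC) :
    (∀ x, b x = btilde x) ∧
    (∀ d : (ℝ → ℝ) → (ℝ → ℝ) → ℝ,
      (∀ f, d f f = 0) → (∀ f g, 0 ≤ d f g) →
      (∀ f g, d f g = 0 → f =ᵐ[volume.restrict C] g) →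
      ∀ (q2 : Polynomial ℝ) (b2 : ℝ → ℝ), (∀ x, b2 x = q2.eval x) →
        IntegrableOn b2 Ωs → (∫ x in Ωs, b2 x = 1) →
        ∀ B2C : ℝ, B2C = ∫ x in C, b2 x → 0 < B2C →
        (d (C.indicator fun x => b x / BC) (C.indicator fun x => b x / BC) = 0 ∧
         0 ≤ d (C.indicator fun x => b x / BC) (C.indicator fun x => b2 x / B2C) ∧
         (d (C.indicator fun x => b x / BC) (C.indicator fun x => b2 x / B2C) = 0 →
            ∀ x, b x = b2 x))) := by
  constructor
  · exact key_step Ωs C hCpos pb b hb hbnorm BC hBCpos qb btilde hbt hbtnorm BtC hBtCpos hprop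
  · intro d hd0 hdnn hdf q2 b2 hb2 hb2int hb2norm B2C hB2C hB2Cpos
    refine ⟨hd0 _, hdnn _ _, fun hzero => ?_⟩
    have hae := hdf _ _ hzero
    have hprop2 : ∀ᵐ x ∂(volume.restrict C), b x / BC = b2 x / B2C := by
      have hmem : ∀ᵐ x ∂(volume.restrict C), x ∈ C := ae_restrict_mem hC
      filter_upwards [hae, hmem] with x hx hxC
      simpa [Set.indicator_of_mem hxC] using hx
    exact key_step Ωs C hCpos pb b hb hbnorm BC hBCpos q2 b2 hb2 hb2norm B2C hB2Cpos hprop2
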